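/- Let Y = {1, …, C} with C ≥ 2, let y ∈ Y, and let f : Y → ℝ. Set b = 1 + (max over t ∈ Y, t ≠ y of f(t)) − f(y). Then ∫₀^∞ (2πλ)^(−1/2) · exp(−(b + λ)²/(2λ)) dλ = exp(−2·max{b, 0}), i.e. the multi-class pseudo-likelihood factor equals the exponential of minus twice the Crammer–Singer multi-class hinge loss. -/

import Mathlib

open MeasureTheory Real Set

private lemma gauss_full : ∫ u : ℝ, Real.exp (-u ^ 2 / 2) = Real.sqrt (2 * π) := by
  have h := integral_gaussian (1/2 : ℝ)
  have he : (fun u : ℝ => Real.exp (-(1/2 : ℝ) * u ^ 2)) = fun u : ℝ => Real.exp (-u ^ 2 / 2) := by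
    funext u; ring_nf
  rw [he] at h
  rw [h, show π / (1/2 : ℝ) = 2 * π by ring]

private lemma gauss_integrable : Integrable (fun u : ℝ => Real.exp (-u ^ 2 / 2)) := by
  have h := integrable_exp_neg_mul_sq (show (0:ℝ) < 1/2 by norm_num)
  have he : (fun u : ℝ => Real.exp (-(1/2 : ℝ) * u ^ 2)) = fun u : ℝ => Real.exp (-u ^ 2 / 2) := by
    funext u; ring_nf
  rwa [he] at h

private lemma odd_int (f : ℝ → ℝ) (hodd : ∀ x, f (-x) = -f x) : ∫ x, f x = 0 := by
  have h := integral_neg_eq_self f (volume : Measure ℝ)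
  simp_rw [hodd, integral_neg] at h
  linarith

private lemma glasser (c : ℝ) (hc : 0 ≤ c) :
    ∫ t in Ioi (0:ℝ), Real.exp (-(t - c / t) ^ 2 / 2) = Real.sqrt (2 * π) / 2 := by
  rcases hc.lt_or_eq with hc | rfl
  swap
  · simp only [zero_div, sub_zero]
    have h := integral_gaussian_Ioi (1/2 : ℝ)
    have he : ∀ t : ℝ, Real.exp (-(1/2 : ℝ) * t ^ 2) = Real.exp (-t ^ 2 / 2) := by
      intro t; ring_nf
    simp_rw [he] at h
    rw [h, show π / (1/2 : ℝ) = 2 * π by ring]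
  · set s : ℝ → ℝ := fun u => Real.sqrt (u ^ 2 + 4 * c) with hs
    have hs4 : ∀ u : ℝ, (0:ℝ) < u ^ 2 + 4 * c := fun u => by positivity
    have hs_pos : ∀ u, 0 < s u := fun u => Real.sqrt_pos.2 (hs4 u)
    have hs_sq : ∀ u, s u ^ 2 = u ^ 2 + 4 * c := fun u => Real.sq_sqrt (hs4 u).le
    have habs : ∀ u, |u| < s u := by
      intro u
      have h1 : Real.sqrt (u ^ 2) < s u := Real.sqrt_lt_sqrt (sq_nonneg u) (by linarith)
      simpa [Real.sqrt_sq_eq_abs] using h1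
    set ψ : ℝ → ℝ := fun u => (u + s u) / 2 with hψ
    have hψ_pos : ∀ u, 0 < ψ u := by
      intro u
      have h1 := habs u
      have h2 : -u ≤ |u| := neg_le_abs u
      simp only [hψ]
      linarith
    have hinv : ∀ u, ψ u - c / ψ u = u := by
      intro u
      have hne : ψ u ≠ 0 := (hψ_pos u).ne'
      have hc2 : c / ψ u = (s u - u) / 2 := by
        rw [div_eq_iff hne]
        simp only [hψ]
        linear_combination -(hs_sq u) / 4
      rw [hc2]
      simp only [hψ]
      ring
    have hψ_deriv : ∀ u, HasDerivAt ψ ((1 + u / s u) / 2) u := by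
      intro u
      have h1 : HasDerivAt (fun u : ℝ => u ^ 2 + 4 * c) (2 * u) u := by
        simpa using ((hasDerivAt_pow 2 u).add_const (4 * c))
      have h2 : HasDerivAt (fun u : ℝ => Real.sqrt (u ^ 2 + 4 * c))
          (1 / (2 * Real.sqrt (u ^ 2 + 4 * c)) * (2 * u)) u :=
        (Real.hasDerivAt_sqrt (hs4 u).ne').comp u h1
      have h3 : HasDerivAt ψ ((1 + 1 / (2 * Real.sqrt (u ^ 2 + 4 * c)) * (2 * u)) / 2) u :=
        ((hasDerivAt_id u).add h2).div_const 2
      convert h3 using 1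
      have hne : Real.sqrt (u ^ 2 + 4 * c) ≠ 0 := by
        simpa [hs] using (hs_pos u).ne'
      simp only [hs]
      field_simp
    have hd_pos : ∀ u : ℝ, 0 < (1 + u / s u) / 2 := by
      intro u
      have h1 : -1 < u / s u := by
        rw [lt_div_iff₀ (hs_pos u)]
        have := habs u
        have := neg_abs_le u
        linarith
      linarith
    have hinj : InjOn ψ univ := by
      intro a _ b _ h
      have ha := hinv a
      have hb := hinv b
      rw [h] at ha
      exact ha.symm.trans hb
    have himg : ψ '' univ = Ioi (0:ℝ) := by
      apply Subset.antisymm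
      · rintro x ⟨u, -, rfl⟩
        exact hψ_pos u
      · intro t ht
        have ht0 : (0:ℝ) < t := ht
        refine ⟨t - c / t, mem_univ _, ?_⟩
        have hs_eq : s (t - c / t) = t + c / t := by
          simp only [hs]
          rw [show (t - c/t)^2 + 4*c = (t + c/t)^2 by field_simp; ring]
          exact Real.sqrt_sq (by positivity)
        simp only [hψ, hs_eq]
        ring
    have hchg := integral_image_eq_integral_abs_deriv_smul MeasurableSet.univ
        (fun u (_ : u ∈ univ) => (hψ_deriv u).hasDerivWithinAt) hinj
        (fun t => Real.exp (-(t - c / t) ^ 2 / 2))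
    rw [himg, Measure.restrict_univ] at hchg
    rw [hchg]
    have heq : ∀ u : ℝ, |(1 + u / s u) / 2| • Real.exp (-(ψ u - c / ψ u) ^ 2 / 2)
        = Real.exp (-u ^ 2 / 2) / 2 + u / s u * Real.exp (-u ^ 2 / 2) / 2 := by
      intro u
      rw [hinv u, abs_of_pos (hd_pos u), smul_eq_mul]
      ring
    simp_rw [heq]
    have I1 : Integrable (fun u : ℝ => Real.exp (-u ^ 2 / 2) / 2) := gauss_integrable.div_const 2
    have hcont : Continuous fun u : ℝ => u / s u * Real.exp (-u ^ 2 / 2) / 2 := by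
      apply Continuous.div_const
      apply Continuous.mul
      · exact continuous_id.div (Real.continuous_sqrt.comp (by continuity))
          (fun u => (hs_pos u).ne')
      · exact Real.continuous_exp.comp (by continuity)
    have I2 : Integrable (fun u : ℝ => u / s u * Real.exp (-u ^ 2 / 2) / 2) := by
      apply I1.mono hcont.aestronglyMeasurable
      filter_upwards with u
      simp only [norm_mul, norm_div, Real.norm_eq_abs]
      rw [abs_of_pos (Real.exp_pos _), show |(2:ℝ)| = 2 by norm_num]
      gcongr
      calc |u| / |s u| * Real.exp (-u ^ 2 / 2)
          ≤ 1 * Real.exp (-u ^ 2 / 2) := by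
            gcongr
            rw [abs_of_pos (hs_pos u), div_le_one (hs_pos u)]
            exact (habs u).le
        _ = Real.exp (-u ^ 2 / 2) := one_mul _
    rw [integral_add I1 I2]
    have hodd : ∫ u : ℝ, u / s u * Real.exp (-u ^ 2 / 2) / 2 = 0 := by
      apply odd_int
      intro x
      simp only [hs, neg_sq]
      ring
    rw [hodd, add_zero, integral_div, gauss_full]

private lemma key_integral (c : ℝ) (hc : 0 ≤ c) :
    ∫ l in Ioi (0:ℝ), (2 * π * l) ^ (-(1:ℝ)/2) * Real.exp (-(l - c) ^ 2 / (2 * l)) = 1 := by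
  have hsq : ∀ x ∈ Ioi (0:ℝ), HasDerivWithinAt (fun t : ℝ => t ^ 2) (2 * x) (Ioi 0) x := by
    intro x _
    simpa using (hasDerivAt_pow 2 x).hasDerivWithinAt
  have hinj : InjOn (fun t : ℝ => t ^ 2) (Ioi 0) := by
    intro a ha b hb h
    have h2 : Real.sqrt (a ^ 2) = Real.sqrt (b ^ 2) := by dsimp only at h; rw [h]
    rwa [Real.sqrt_sq (le_of_lt ha), Real.sqrt_sq (le_of_lt hb)] at h2
  have himg : (fun t : ℝ => t ^ 2) '' Ioi 0 = Ioi (0:ℝ) := by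
    apply Subset.antisymm
    · rintro x ⟨t, ht, rfl⟩
      exact pow_pos (mem_Ioi.mp ht) 2
    · intro x hx
      exact ⟨Real.sqrt x, Real.sqrt_pos.2 hx, Real.sq_sqrt (le_of_lt hx)⟩
  have hchg := integral_image_eq_integral_abs_deriv_smul measurableSet_Ioi hsq hinj
      (fun l => (2 * π * l) ^ (-(1:ℝ)/2) * Real.exp (-(l - c) ^ 2 / (2 * l)))
  rw [himg] at hchg
  rw [hchg]
  have hpt : ∀ t ∈ Ioi (0:ℝ),
      |2 * t| • ((2 * π * t ^ 2) ^ (-(1:ℝ)/2) * Real.exp (-(t ^ 2 - c) ^ 2 / (2 * t ^ 2)))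
      = 2 / Real.sqrt (2 * π) * Real.exp (-(t - c / t) ^ 2 / 2) := by
    intro t ht
    have ht0 : (0:ℝ) < t := ht
    have hsπ : (0:ℝ) < Real.sqrt (2 * π) := Real.sqrt_pos.2 (by positivity)
    have h1 : (2 * π * t ^ 2) ^ (-(1:ℝ)/2) = (Real.sqrt (2 * π) * t)⁻¹ := by
      rw [show (-(1:ℝ)/2) = -(1/2) by norm_num, Real.rpow_neg (by positivity),
        ← Real.sqrt_eq_rpow, Real.sqrt_mul (by positivity), Real.sqrt_sq ht0.le]
    have h2 : -(t ^ 2 - c) ^ 2 / (2 * t ^ 2) = -(t - c / t) ^ 2 / 2 := by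
      field_simp
    rw [h1, h2, abs_of_pos (by positivity : (0:ℝ) < 2 * t), smul_eq_mul]
    field_simp
  rw [setIntegral_congr_fun measurableSet_Ioi hpt, integral_const_mul, glasser c hc]
  have hsπ : Real.sqrt (2 * π) ≠ 0 := (Real.sqrt_pos.2 (by positivity)).ne'
  field_simp

theorem multiclass_svm_pseudo_likelihood (C : ℕ) (hC : 2 ≤ C) (y : Fin C)
    (f : Fin C → ℝ)
    (b : ℝ)
    (hb : b = 1 + (Finset.univ.erase y).sup'
      (by
        rw [← Finset.card_pos, Finset.card_erase_of_mem (Finset.mem_univ y),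
          Finset.card_univ, Fintype.card_fin]
        omega) f - f y) :
    ∫ l in Ioi (0:ℝ), (2 * π * l) ^ (-(1:ℝ)/2) *
      Real.exp (-(b + l) ^ 2 / (2 * l)) = Real.exp (-2 * max b 0) := by
  rcases le_total b 0 with hb0 | hb0
  · rw [max_eq_right hb0, mul_zero, Real.exp_zero]
    have hkey := key_integral (-b) (by linarith)
    refine Eq.trans ?_ hkey
    apply setIntegral_congr_fun measurableSet_Ioi
    intro l _
    dsimp only
    have : (b + l) ^ 2 = (l - -b) ^ 2 := by ring
    rw [this]
  · rw [max_eq_left hb0]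
    have hkey := key_integral b hb0
    have hpt : ∀ l ∈ Ioi (0:ℝ), (2 * π * l) ^ (-(1:ℝ)/2) * Real.exp (-(b + l) ^ 2 / (2 * l))
        = Real.exp (-2 * b) * ((2 * π * l) ^ (-(1:ℝ)/2) * Real.exp (-(l - b) ^ 2 / (2 * l))) := by
      intro l hl
      have hl0 : (0:ℝ) < l := hl
      rw [show Real.exp (-2 * b) * ((2 * π * l) ^ (-(1:ℝ)/2) * Real.exp (-(l - b) ^ 2 / (2 * l)))
          = (2 * π * l) ^ (-(1:ℝ)/2) * (Real.exp (-2 * b) * Real.exp (-(l - b) ^ 2 / (2 * l)))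
          by ring, ← Real.exp_add]
      congr 1
      field_simp
      ring
    rw [setIntegral_congr_fun measurableSet_Ioi hpt, integral_const_mul, hkey, mul_one]
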